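/- Let d ≥ 2 be even, k ≥ 1, and t_1 ≤ t_2 ≤ … ≤ t_k positive reals. Define s_1 = t_1 and s_i > 0 by s_{i−1}^2/2 + s_i^2/2 = t_i^2 for 2 ≤ i ≤ k (so s_i is well-defined since s_{i−1}^2/2 < t_{i−1}^2 ≤ t_i^2). Let K_i ⊂ s_i·S^{d/2−1} ⊂ ℝ^{d/2} be Ahlfors–David regular sets of Hausdorff dimension α ≤ ⌊d/2⌋ − 1, and let E ⊂ ℝ^d = ℝ^{d/2} × ℝ^{d/2} be the union of {(y/√2, 0) : y ∈ K_i for some i} and {(0, y/√2) : y ∈ K_i for some i}. Then any alternating tuple ((ỹ_1/√2, 0), (0, y_1/√2), (y_2/√2, 0), …) with ỹ_1 ∈ K_1 and y_i ∈ K_i forms a k-chain with consecutive distances exactly t_1, …, t_k, and hence dim_H(VS^k_t(E)) ≥ (k+1)α. -/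

import Mathlib

open MeasureTheory ENNReal

/-- A set `K` is Ahlfors–David `α`-regular: it supports a Borel probability measure `μ`
with `c·r^α ≤ μ(B(x,r)) ≤ C·r^α` for all `x ∈ K` and `0 < r < diam K`. -/
def ADRegular {X : Type*} [MetricSpace X] [MeasurableSpace X] (α : ℝ) (K : Set X) : Prop :=
  ∃ (μ : Measure X) (c C : ℝ), 0 < c ∧ c ≤ C ∧ IsProbabilityMeasure μ ∧ μ Kᶜ = 0 ∧
    ∀ x ∈ K, ∀ r : ℝ, 0 < r → r < Metric.diam K →
      ENNReal.ofReal (c * r ^ α) ≤ μ (Metric.ball x r) ∧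
      μ (Metric.ball x r) ≤ ENNReal.ofReal (C * r ^ α)

/-- The vertex set `VS^k_t(E)` of non-degenerate `k`-chains with prescribed gaps `t`. -/
def VSChain {ι : Type*} [Fintype ι] (k : ℕ) (t : Fin k → ℝ)
    (E : Set (EuclideanSpace ℝ ι)) : Set (Fin (k + 1) → EuclideanSpace ℝ ι) :=
  {p | (∀ j, p j ∈ E) ∧ (∀ j : Fin k, dist (p j.castSucc) (p j.succ) = t j) ∧
    Function.Injective p}

/-- Embedding `y ↦ (y/√2, 0)` of `ℝ^{d/2}` into `ℝ^d = ℝ^{d/2} × ℝ^{d/2}`. -/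
noncomputable def embL (m : ℕ) (y : EuclideanSpace ℝ (Fin m)) :
    EuclideanSpace ℝ (Fin m ⊕ Fin m) :=
  (WithLp.equiv 2 (Fin m ⊕ Fin m → ℝ)).symm (Sum.elim (fun a => y a / Real.sqrt 2) 0)

/-- Embedding `y ↦ (0, y/√2)` of `ℝ^{d/2}` into `ℝ^d = ℝ^{d/2} × ℝ^{d/2}`. -/
noncomputable def embR (m : ℕ) (y : EuclideanSpace ℝ (Fin m)) :
    EuclideanSpace ℝ (Fin m ⊕ Fin m) :=
  (WithLp.equiv 2 (Fin m ⊕ Fin m → ℝ)).symm (Sum.elim 0 (fun a => y a / Real.sqrt 2))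

lemma embL_inl (m : ℕ) (y : EuclideanSpace ℝ (Fin m)) (a : Fin m) :
    embL m y (Sum.inl a) = y a / Real.sqrt 2 := rfl
lemma embL_inr (m : ℕ) (y : EuclideanSpace ℝ (Fin m)) (a : Fin m) :
    embL m y (Sum.inr a) = 0 := rfl
lemma embR_inl (m : ℕ) (y : EuclideanSpace ℝ (Fin m)) (a : Fin m) :
    embR m y (Sum.inl a) = 0 := rfl
lemma embR_inr (m : ℕ) (y : EuclideanSpace ℝ (Fin m)) (a : Fin m) :
    embR m y (Sum.inr a) = y a / Real.sqrt 2 := rfl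

lemma dist_sq_div_sqrt2 (x y : ℝ) :
    dist (x / Real.sqrt 2) (y / Real.sqrt 2) ^ 2 = dist x y ^ 2 / 2 := by
  have h2 : (0:ℝ) < Real.sqrt 2 := by positivity
  rw [Real.dist_eq, Real.dist_eq, div_sub_div_same, abs_div,
    abs_of_pos h2, div_pow, Real.sq_sqrt (by norm_num : (2:ℝ) ≥ 0)]

lemma dist_embL_embL (m : ℕ) (u v : EuclideanSpace ℝ (Fin m)) :
    dist (embL m u) (embL m v) = dist u v / Real.sqrt 2 := by
  rw [EuclideanSpace.dist_eq, EuclideanSpace.dist_eq, Fintype.sum_sum_type]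
  simp only [embL_inl, embL_inr, dist_sq_div_sqrt2, dist_self]
  rw [← Finset.sum_div]
  simp only [ne_eq, OfNat.ofNat_ne_zero, not_false_eq_true, zero_pow, Finset.sum_const,
    smul_zero, add_zero]
  rw [Real.sqrt_div (by positivity) 2]

lemma dist_embR_embR (m : ℕ) (u v : EuclideanSpace ℝ (Fin m)) :
    dist (embR m u) (embR m v) = dist u v / Real.sqrt 2 := by
  rw [EuclideanSpace.dist_eq, EuclideanSpace.dist_eq, Fintype.sum_sum_type]
  simp only [embR_inl, embR_inr, dist_sq_div_sqrt2, dist_self]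
  rw [← Finset.sum_div]
  simp only [ne_eq, OfNat.ofNat_ne_zero, not_false_eq_true, zero_pow, Finset.sum_const,
    smul_zero, zero_add]
  rw [Real.sqrt_div (by positivity) 2]

lemma norm_sq_eq_sum (m : ℕ) (u : EuclideanSpace ℝ (Fin m)) :
    ‖u‖ ^ 2 = ∑ a, u a ^ 2 := by
  rw [EuclideanSpace.norm_eq, Real.sq_sqrt (by positivity)]
  simp [Real.norm_eq_abs, sq_abs]

lemma dist_embL_embR (m : ℕ) (u v : EuclideanSpace ℝ (Fin m)) :
    dist (embL m u) (embR m v) = Real.sqrt ((‖u‖ ^ 2 + ‖v‖ ^ 2) / 2) := by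
  rw [EuclideanSpace.dist_eq, Fintype.sum_sum_type]
  have hl : ∀ a : Fin m, dist (embL m u (Sum.inl a)) (embR m v (Sum.inl a)) ^ 2
      = u a ^ 2 / 2 := by
    intro a
    rw [embL_inl, embR_inl]
    have := dist_sq_div_sqrt2 (u a) 0
    simpa [Real.dist_eq, sq_abs] using this
  have hr : ∀ a : Fin m, dist (embL m u (Sum.inr a)) (embR m v (Sum.inr a)) ^ 2
      = v a ^ 2 / 2 := by
    intro a
    rw [embL_inr, embR_inr]
    have := dist_sq_div_sqrt2 0 (v a)
    simpa [Real.dist_eq, sq_abs] using this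
  simp only [hl, hr]
  rw [← Finset.sum_div, ← Finset.sum_div, norm_sq_eq_sum, norm_sq_eq_sum, ← add_div]

lemma embL_injective (m : ℕ) : Function.Injective (embL m) := by
  intro u v h
  have hd := dist_embL_embL m u v
  rw [h, dist_self] at hd
  have h2 : (0:ℝ) < Real.sqrt 2 := by positivity
  field_simp at hd; exact dist_eq_zero.mp (by rw [zero_mul] at hd; exact hd.symm)

lemma embR_injective (m : ℕ) : Function.Injective (embR m) := by
  intro u v h
  have hd := dist_embR_embR m u v
  rw [h, dist_self] at hd
  have h2 : (0:ℝ) < Real.sqrt 2 := by positivity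
  field_simp at hd; exact dist_eq_zero.mp (by rw [zero_mul] at hd; exact hd.symm)

lemma embL_ne_embR (m : ℕ) {u v : EuclideanSpace ℝ (Fin m)} (hu : u ≠ 0) :
    embL m u ≠ embR m v := by
  intro h
  have hd := dist_embL_embR m u v
  rw [h, dist_self] at hd
  have h1 : 0 < ‖u‖ := norm_pos_iff.mpr hu
  have : (0:ℝ) < Real.sqrt ((‖u‖ ^ 2 + ‖v‖ ^ 2) / 2) := by
    apply Real.sqrt_pos.mpr; positivity
  rw [← hd] at this; exact lt_irrefl 0 this

lemma diag_null {E' : Type*} [MeasurableSpace E'] [MetricSpace E'] [BorelSpace E']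
    [SecondCountableTopology E'] {n : ℕ} (ν : Fin (n + 1) → Measure E')
    [∀ j, SigmaFinite (ν j)] [∀ j, NullSingletonClass (ν j)] {i j : Fin (n + 1)} (hij : i ≠ j) :
    Measure.pi ν {p | p i = p j} = 0 := by
  obtain ⟨l, hl⟩ := Fin.exists_succAbove_eq hij.symm
  have hmp := measurePreserving_piFinSuccAbove ν i
  have hBmeas : MeasurableSet {z : E' × (Fin n → E') | z.2 l = z.1} :=
    (isClosed_eq (by fun_prop) (by fun_prop)).measurableSet
  have hset : {p : Fin (n + 1) → E' | p i = p j}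
      = (MeasurableEquiv.piFinSuccAbove (fun _ => E') i) ⁻¹' {z | z.2 l = z.1} := by
    ext p
    simp only [Set.mem_setOf_eq, Set.mem_preimage, MeasurableEquiv.piFinSuccAbove_apply]
    rw [← hl]
    constructor
    · intro h; simpa [Fin.removeNth] using h.symm
    · intro h; simpa [Fin.removeNth] using h.symm
  rw [hset, hmp.measure_preimage hBmeas.nullMeasurableSet,
    Measure.prod_apply hBmeas]
  have hfib : ∀ x : E', (Prod.mk x ⁻¹' {z : E' × (Fin n → E') | z.2 l = z.1})
      = {q : Fin n → E' | q l = x} := by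
    intro x; ext q; simp [eq_comm]
  simp only [hfib]
  have hz : ∀ x : E', Measure.pi (fun l' => ν (i.succAbove l')) {q : Fin n → E' | q l = x} = 0 :=
    fun x => Measure.pi_hyperplane (μ := fun l' => ν (i.succAbove l')) l x
  simp [hz]

/-- Orthogonal-spheres construction: with `d = 2m` even, `t₁ ≤ … ≤ t_k` positive,
radii `s_i` defined by `s_1 = t_1` and `s_{i-1}²/2 + s_i²/2 = t_i²`, AD regular sets
`K_i ⊂ s_i·S^{d/2−1}` of Hausdorff dimension `α ≤ ⌊d/2⌋ − 1`, and `E` the union of the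
two coordinate embeddings of the `K_i`, every alternating tuple forms a `k`-chain with
consecutive distances `t₁,…,t_k`, and `dim_H(VS^k_t(E)) ≥ (k+1)α`. -/
theorem stmt_12 (m k : ℕ) (hm : 1 ≤ m) (hk : 1 ≤ k)
    (α : ℝ) (hα : 0 < α) (hαm : α ≤ (m : ℝ) - 1)
    (t s : ℕ → ℝ)
    (htpos : ∀ i, i < k → 0 < t i)
    (htmono : ∀ i j, i ≤ j → j < k → t i ≤ t j)
    (hs0 : s 0 = t 0) (hspos : ∀ i, i < k → 0 < s i)
    (hsrec : ∀ i, i + 1 < k → s i ^ 2 / 2 + s (i + 1) ^ 2 / 2 = t (i + 1) ^ 2)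
    (K : ℕ → Set (EuclideanSpace ℝ (Fin m)))
    (hKsub : ∀ i, i < k → K i ⊆ Metric.sphere 0 (s i))
    (hKAD : ∀ i, i < k → ADRegular α (K i))
    (hKdim : ∀ i, i < k → dimH (K i) = ENNReal.ofReal α)
    (E : Set (EuclideanSpace ℝ (Fin m ⊕ Fin m)))
    (hE : E = (embL m '' ⋃ i ∈ Set.Iio k, K i) ∪ (embR m '' ⋃ i ∈ Set.Iio k, K i)) :
    (∀ w ∈ K 0, ∀ y : ℕ → EuclideanSpace ℝ (Fin m), (∀ i, i < k → y i ∈ K i) →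
      ∀ z : ℕ → EuclideanSpace ℝ (Fin m ⊕ Fin m),
        z 0 = embL m w →
        (∀ n, z (n + 1) = if Even n then embR m (y n) else embL m (y n)) →
        ∀ j, j < k → dist (z j) (z (j + 1)) = t j) ∧
    ENNReal.ofReal (((k : ℝ) + 1) * α) ≤
      dimH (VSChain k (fun j : Fin k => t j) E) := by
  classical
  -- the key scalar computation
  have hDist : ∀ i, i < k → ∀ a b : ℝ, a = s (i - 1) → b = s i →
      Real.sqrt ((a ^ 2 + b ^ 2) / 2) = t i := by
    intro i hi a b ha hb
    subst ha; subst hb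
    match i with
    | 0 =>
      have h1 : (s (0 - 1) ^ 2 + s 0 ^ 2) / 2 = s 0 ^ 2 := by norm_num
      rw [h1, Real.sqrt_sq (hspos 0 hk).le, hs0]
    | (n + 1) =>
      have h2 := hsrec n hi
      have h1 : (s (n + 1 - 1) ^ 2 + s (n + 1) ^ 2) / 2 = t (n + 1) ^ 2 := by
        simp only [Nat.add_sub_cancel]; linarith
      rw [h1, Real.sqrt_sq (htpos _ hi).le]
  have hnormK : ∀ i, i < k → ∀ x ∈ K i, ‖x‖ = s i := fun i h x hx =>
    mem_sphere_zero_iff_norm.mp (hKsub i h hx)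
  constructor
  · -- Part 1
    intro w hw y hy z h0 hrec j hj
    match j with
    | 0 =>
      rw [h0, hrec 0, if_pos Even.zero, dist_embL_embR]
      exact hDist 0 hj _ _ (hnormK 0 hk w hw) (hnormK 0 hj _ (hy 0 hj))
    | (i + 1) =>
      have hik : i < k := Nat.lt_of_succ_lt hj
      have hni : ‖y i‖ = s i := hnormK i hik _ (hy i hik)
      have hni1 : ‖y (i + 1)‖ = s (i + 1) := hnormK (i+1) hj _ (hy (i+1) hj)
      rw [hrec i, hrec (i + 1)]
      rcases Nat.even_or_odd i with he | ho
      · rw [if_pos he, if_neg (by simp [Nat.even_add_one, he]), dist_comm, dist_embL_embR,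
          add_comm (‖y (i + 1)‖ ^ 2)]
        exact hDist (i + 1) hj _ _ (by simpa using hni) hni1
      · rw [if_neg (Nat.not_even_iff_odd.mpr ho), if_pos (Nat.even_add_one.mpr
          (Nat.not_even_iff_odd.mpr ho)), dist_embL_embR]
        exact hDist (i + 1) hj _ _ (by simpa using hni) hni1
  · -- Part 2
    choose! μ cc CC hc hcC hprob hnull hball using hKAD
    have hkk : ∀ j : Fin (k + 1), ((j : ℕ) - 1) < k := fun j => by
      have := j.isLt; omega
    have hdiam : ∀ i, i < k → 0 < Metric.diam (K i) := by
      intro i h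
      have hnt : (K i).Nontrivial := by
        by_contra hcon
        have hsub : (K i).Subsingleton := Set.not_nontrivial_iff.mp hcon
        have := hKdim i h
        rw [dimH_subsingleton hsub] at this
        exact absurd this.symm (ne_of_gt (ENNReal.ofReal_pos.mpr hα))
      obtain ⟨a, ha, b, hb, hab⟩ := hnt
      have hbd : Bornology.IsBounded (K i) :=
        (Metric.isBounded_closedBall (x := (0: EuclideanSpace ℝ (Fin m))) (r := s i)).subset
          ((hKsub i h).trans Metric.sphere_subset_closedBall)
      calc (0:ℝ) < dist a b := dist_pos.mpr hab
        _ ≤ Metric.diam (K i) := Metric.dist_le_diam_of_mem hbd ha hb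
    have hsingle : ∀ i, i < k → ∀ x : EuclideanSpace ℝ (Fin m), μ i {x} = 0 := by
      intro i h x
      by_cases hx : x ∈ K i
      · have htd : Filter.Tendsto (fun r : ℝ => ENNReal.ofReal (CC i * r ^ α))
            (nhdsWithin 0 (Set.Ioi 0)) (nhds 0) := by
          have h1 : ContinuousAt (fun r : ℝ => r ^ α) 0 :=
            Real.continuousAt_rpow_const 0 α (Or.inr hα.le)
          have h2 : Filter.Tendsto (fun r : ℝ => CC i * r ^ α) (nhdsWithin 0 (Set.Ioi 0))
              (nhds (CC i * (0:ℝ) ^ α)) :=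
            Filter.Tendsto.mul tendsto_const_nhds (h1.tendsto.mono_left nhdsWithin_le_nhds)
          rw [Real.zero_rpow hα.ne', mul_zero] at h2
          have := (ENNReal.continuous_ofReal.tendsto 0).comp h2
          simpa [Function.comp_def] using this
        have hev : ∀ᶠ r in nhdsWithin 0 (Set.Ioi 0),
            μ i {x} ≤ ENNReal.ofReal (CC i * r ^ α) := by
          filter_upwards [Ioo_mem_nhdsGT_of_mem ⟨le_refl (0:ℝ), hdiam i h⟩] with r hr
          calc μ i {x} ≤ μ i (Metric.ball x r) :=
              measure_mono (Set.singleton_subset_iff.mpr (Metric.mem_ball_self hr.1))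
            _ ≤ _ := (hball i h x hx r hr.1 hr.2).2
        exact le_antisymm (ge_of_tendsto htd hev) (by simp)
      · exact measure_mono_null (by simpa using hx) (hnull i h)
    set ν : Fin (k + 1) → Measure (EuclideanSpace ℝ (Fin m)) := fun j => μ ((j : ℕ) - 1) with hν
    haveI hPI : ∀ j : Fin (k + 1), IsProbabilityMeasure (ν j) := fun j => hprob _ (hkk j)
    haveI hNA : ∀ j : Fin (k + 1), NullSingletonClass (ν j) := fun j => ⟨fun x => hsingle _ (hkk j) x⟩
    set P : Measure (Fin (k + 1) → EuclideanSpace ℝ (Fin m)) := Measure.pi ν with hP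
    -- extended ball bound constants
    have hDex : ∀ i, i < k → ∃ D : ℝ, 1 ≤ D ∧ ∀ x ∈ K i, ∀ r : ℝ, 0 < r →
        μ i (Metric.ball x r) ≤ ENNReal.ofReal (D * r ^ α) := by
      intro i h
      refine ⟨max 1 (max (CC i) ((Metric.diam (K i)) ^ α)⁻¹), le_max_left _ _, ?_⟩
      intro x hx r hr
      rcases lt_or_ge r (Metric.diam (K i)) with hlt | hge
      · refine le_trans (hball i h x hx r hr hlt).2 (ENNReal.ofReal_le_ofReal ?_)
        exact mul_le_mul_of_nonneg_right ((le_max_left _ _).trans (le_max_right _ _))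
          (Real.rpow_nonneg hr.le α)
      · haveI := hprob i h
        have h1 : μ i (Metric.ball x r) ≤ 1 := prob_le_one
        refine le_trans h1 ?_
        rw [← ENNReal.ofReal_one]
        apply ENNReal.ofReal_le_ofReal
        have hd0 : 0 < Metric.diam (K i) := hdiam i h
        have hda : 0 < Metric.diam (K i) ^ α := Real.rpow_pos_of_pos hd0 α
        have h2 : Metric.diam (K i) ^ α ≤ r ^ α := Real.rpow_le_rpow hd0.le hge hα.le
        calc (1:ℝ) = (Metric.diam (K i) ^ α)⁻¹ * Metric.diam (K i) ^ α := by field_simp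
          _ ≤ max 1 (max (CC i) ((Metric.diam (K i)) ^ α)⁻¹) * r ^ α :=
            mul_le_mul ((le_max_right _ _).trans (le_max_right _ _)) h2 hda.le (by positivity)
    choose! D hD1 hDball using hDex
    set M : ℝ := ∑ i ∈ Finset.range k, D i with hMdef
    have hM1 : ∀ i, i < k → D i ≤ M := fun i h =>
      Finset.single_le_sum (fun j hj => le_trans zero_le_one (hD1 j (Finset.mem_range.mp hj)))
        (Finset.mem_range.mpr h)
    have hMpos : (1:ℝ) ≤ M := le_trans (hD1 0 hk) (hM1 0 hk)
    have hM0 : (0:ℝ) < M := lt_of_lt_of_le one_pos hMpos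
    have hPball : ∀ p : Fin (k + 1) → EuclideanSpace ℝ (Fin m), (∀ j : Fin (k + 1), p j ∈ K ((j : ℕ) - 1)) → ∀ r : ℝ, 0 < r →
        P (Metric.ball p r) ≤ ENNReal.ofReal ((M * r ^ α) ^ (k + 1)) := by
      intro p hp r hr
      rw [ball_pi _ hr, hP, Measure.pi_pi]
      calc ∏ j : Fin (k + 1), ν j (Metric.ball (p j) r)
          ≤ ∏ _j : Fin (k + 1), ENNReal.ofReal (M * r ^ α) := by
            apply Finset.prod_le_prod'
            intro j _
            refine le_trans (hDball _ (hkk j) (p j) (hp j) r hr) (ENNReal.ofReal_le_ofReal ?_)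
            exact mul_le_mul_of_nonneg_right (hM1 _ (hkk j)) (Real.rpow_nonneg hr.le α)
        _ = ENNReal.ofReal ((M * r ^ α) ^ (k + 1)) := by
            rw [Finset.prod_const, Finset.card_univ, Fintype.card_fin,
              ← ENNReal.ofReal_pow (by positivity)]
    set A : Set (Fin (k + 1) → EuclideanSpace ℝ (Fin m)) := Set.univ.pi fun j : Fin (k + 1) => K ((j : ℕ) - 1)
      with hA
    set Bad : Set (Fin (k + 1) → EuclideanSpace ℝ (Fin m)) :=
      ⋃ (i : Fin (k + 1)), ⋃ (j : Fin (k + 1)), ⋃ (_ : i ≠ j), {p | p i = p j} with hBadDef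
    set G : Set (Fin (k + 1) → EuclideanSpace ℝ (Fin m)) := A \ Bad with hG
    have hAc : P Aᶜ = 0 := by
      have hAeq : Aᶜ = ⋃ j : Fin (k + 1), Function.eval j ⁻¹' (K ((j : ℕ) - 1))ᶜ := by
        ext p; simp [hA, Set.mem_pi]
      rw [hAeq, hP]
      exact measure_iUnion_null fun j => Measure.pi_eval_preimage_null (μ := ν) (hnull _ (hkk j))
    have hBad : P Bad = 0 := by
      refine measure_iUnion_null fun i => measure_iUnion_null fun j =>
        measure_iUnion_null fun hij => ?_
      exact diag_null ν hij
    have hPG : P G = 1 := by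
      rw [hG, measure_diff_null hBad]
      have h3 : P (Set.univ \ Aᶜ) = P Set.univ := measure_diff_null hAc
      simpa [Set.diff_eq, compl_compl, measure_univ] using h3
    -- mass distribution principle
    set dR : ℝ := ((k : ℝ) + 1) * α with hdR
    have hdpos : (0:ℝ) < dR := by positivity
    set CN : ℝ := (2 ^ α * M) ^ (k + 1) with hCN
    have hCNpos : (0:ℝ) < CN := by
      have : (0:ℝ) < (2:ℝ) ^ α := Real.rpow_pos_of_pos two_pos α
      positivity
    set Q : Measure (Fin (k + 1) → EuclideanSpace ℝ (Fin m)) := (ENNReal.ofReal CN)⁻¹ • P with hQ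
    have hQle : Q ≤ μH[dR] := by
      apply Measure.le_hausdorffMeasure dR Q 1 one_pos
      intro S hS
      by_cases hSA : (S ∩ A).Nonempty
      · obtain ⟨x, hxS, hxA⟩ := hSA
        by_cases hd0 : EMetric.diam S = 0
        · have hsub : S.Subsingleton := EMetric.diam_eq_zero_iff.mp hd0
          have hPS : P S = 0 :=
            measure_mono_null (fun y hy => hsub hy hxS) (measure_singleton x)
          simp [hQ, hPS]
        · have hdne : EMetric.diam S ≠ ⊤ := (lt_of_le_of_lt hS ENNReal.one_lt_top).ne
          set e : ℝ := (EMetric.diam S).toReal with he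
          have hepos : (0:ℝ) < e := ENNReal.toReal_pos hd0 hdne
          have hsub : S ⊆ Metric.ball x (2 * e) := by
            intro y hy
            have h1 : edist y x ≤ EMetric.diam S := EMetric.edist_le_diam_of_mem hy hxS
            have h2 : dist y x ≤ e := by
              rw [dist_edist]; exact ENNReal.toReal_mono hdne h1
            have : dist y x < 2 * e := by linarith
            exact Metric.mem_ball.mpr this
          have hPS : P S ≤ ENNReal.ofReal ((M * (2 * e) ^ α) ^ (k + 1)) :=
            le_trans (measure_mono hsub)
              (hPball x (fun j => hxA j (Set.mem_univ j)) (2 * e) (by positivity))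
          have hconv : ENNReal.ofReal ((M * (2 * e) ^ α) ^ (k + 1))
              = ENNReal.ofReal CN * EMetric.diam S ^ dR := by
            have h1 : (M * (2 * e) ^ α) ^ (k + 1) = CN * (e ^ α) ^ (k + 1) := by
              rw [Real.mul_rpow (by norm_num) hepos.le, hCN]
              ring
            rw [h1, ENNReal.ofReal_mul hCNpos.le]
            congr 1
            rw [ENNReal.ofReal_pow (Real.rpow_nonneg hepos.le α),
              ← ENNReal.ofReal_rpow_of_pos hepos, he, ENNReal.ofReal_toReal hdne,
              ← ENNReal.rpow_natCast (EMetric.diam S ^ α) (k + 1),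
              ← ENNReal.rpow_mul]
            congr 1
            rw [hdR]; push_cast; ring
          calc Q S = (ENNReal.ofReal CN)⁻¹ * P S := by simp [hQ]
            _ ≤ (ENNReal.ofReal CN)⁻¹ * (ENNReal.ofReal CN * EMetric.diam S ^ dR) := by
                rw [← hconv]; exact mul_le_mul_right hPS _
            _ = EMetric.diam S ^ dR := by
                rw [← mul_assoc, ENNReal.inv_mul_cancel
                  (by simp [ENNReal.ofReal_pos, hCNpos]) ENNReal.ofReal_ne_top, one_mul]
      · have hSsub : S ⊆ Aᶜ := by
          intro y hy hyA
          exact hSA ⟨y, hy, hyA⟩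
        have hPS : P S = 0 := measure_mono_null hSsub hAc
        simp [hQ, hPS]
    have hHG : μH[dR] G ≠ 0 := by
      intro h0
      have h1 : Q G ≤ μH[dR] G := Measure.le_iff'.mp hQle G
      rw [h0] at h1
      have hQG : Q G = (ENNReal.ofReal CN)⁻¹ := by simp [hQ, hPG]
      rw [hQG] at h1
      have : (ENNReal.ofReal CN)⁻¹ = 0 := le_antisymm h1 (by simp)
      rw [ENNReal.inv_eq_zero] at this
      exact ENNReal.ofReal_ne_top this
    have hdim : ENNReal.ofReal dR ≤ dimH G := by
      have h1 : ((dR.toNNReal : NNReal) : ℝ≥0∞) ≤ dimH G := by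
        apply le_dimH_of_hausdorffMeasure_ne_zero
        have : ((dR.toNNReal : NNReal) : ℝ) = dR := Real.coe_toNNReal _ hdpos.le
        rw [this]
        exact hHG
      simpa [ENNReal.ofReal] using h1
    -- the embedding of the product set into the chain set
    set Ψ : (Fin (k + 1) → EuclideanSpace ℝ (Fin m)) → (Fin (k + 1) → EuclideanSpace ℝ (Fin m ⊕ Fin m)) :=
      fun p j => if Even (j : ℕ) then embL m (p j) else embR m (p j) with hΨ
    have hanti : AntilipschitzWith (Real.toNNReal (Real.sqrt 2)) Ψ := by
      rw [antilipschitzWith_iff_le_mul_dist]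
      intro p q
      have h2 : (0:ℝ) < Real.sqrt 2 := by positivity
      rw [Real.coe_toNNReal _ h2.le]
      refine (dist_pi_le_iff (by positivity)).mpr fun j => ?_
      have hco : dist (p j) (q j) = Real.sqrt 2 * dist (Ψ p j) (Ψ q j) := by
        by_cases hj : Even (j : ℕ)
        · simp only [hΨ, if_pos hj, dist_embL_embL]; field_simp
        · simp only [hΨ, if_neg hj, dist_embR_embR]; field_simp
      rw [hco]
      exact mul_le_mul_of_nonneg_left (dist_le_pi_dist (Ψ p) (Ψ q) j) h2.le
    have himg : Ψ '' G ⊆ VSChain k (fun j : Fin k => t j) E := by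
      rintro _ ⟨p, hpG, rfl⟩
      obtain ⟨hpA, hpBad⟩ := hpG
      have hpK : ∀ j : Fin (k + 1), p j ∈ K ((j : ℕ) - 1) := fun j => hpA j (Set.mem_univ j)
      have hpne : ∀ i j : Fin (k + 1), i ≠ j → p i ≠ p j := by
        intro i j hij hpij
        exact hpBad (Set.mem_iUnion.mpr ⟨i, Set.mem_iUnion.mpr ⟨j,
          Set.mem_iUnion.mpr ⟨hij, hpij⟩⟩⟩)
      have hpnz : ∀ j : Fin (k + 1), p j ≠ 0 := by
        intro j h0
        have h1 := hnormK _ (hkk j) _ (hpK j)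
        rw [h0, norm_zero] at h1
        exact absurd h1.symm (ne_of_gt (hspos _ (hkk j)))
      refine ⟨?_, ?_, ?_⟩
      · intro j
        rw [hE]
        by_cases hj : Even (j : ℕ)
        · exact Or.inl ⟨p j, Set.mem_biUnion (hkk j) (hpK j), by simp [hΨ, hj]⟩
        · exact Or.inr ⟨p j, Set.mem_biUnion (hkk j) (hpK j), by simp [hΨ, hj]⟩
      · intro j
        have hc : ((j.castSucc : Fin (k + 1)) : ℕ) = (j : ℕ) := rfl
        have hsu : ((j.succ : Fin (k + 1)) : ℕ) = (j : ℕ) + 1 := rfl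
        have hnu : ‖p j.castSucc‖ = s ((j : ℕ) - 1) := by
          have := hnormK _ (hkk j.castSucc) _ (hpK j.castSucc)
          simpa [hc] using this
        have hnv : ‖p j.succ‖ = s (j : ℕ) := by
          have := hnormK _ (hkk j.succ) _ (hpK j.succ)
          simpa [hsu] using this
        by_cases hj : Even (j : ℕ)
        · have h1 : Ψ p j.castSucc = embL m (p j.castSucc) := by simp [hΨ, hc, hj]
          have h2 : Ψ p j.succ = embR m (p j.succ) := by
            simp [hΨ, hsu, Nat.even_add_one, hj]
          rw [h1, h2, dist_embL_embR]
          exact hDist (j : ℕ) j.isLt _ _ hnu hnv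
        · have h1 : Ψ p j.castSucc = embR m (p j.castSucc) := by simp [hΨ, hc, hj]
          have h2 : Ψ p j.succ = embL m (p j.succ) := by
            simp [hΨ, hsu, Nat.even_add_one, hj]
          rw [h1, h2, dist_comm, dist_embL_embR, add_comm (‖p j.succ‖ ^ 2)]
          exact hDist (j : ℕ) j.isLt _ _ hnu hnv
      · intro i j hij
        by_contra hne
        have hij' := hpne i j hne
        by_cases hi : Even (i : ℕ)
        · by_cases hj : Even (j : ℕ)
          · have : embL m (p i) = embL m (p j) := by simpa [hΨ, hi, hj] using hij
            exact hij' (embL_injective m this)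
          · have : embL m (p i) = embR m (p j) := by simpa [hΨ, hi, hj] using hij
            exact embL_ne_embR m (hpnz i) this
        · by_cases hj : Even (j : ℕ)
          · have : embL m (p j) = embR m (p i) := by simpa [hΨ, hi, hj] using hij.symm
            exact embL_ne_embR m (hpnz j) this
          · have : embR m (p i) = embR m (p j) := by simpa [hΨ, hi, hj] using hij
            exact hij' (embR_injective m this)
    calc ENNReal.ofReal (((k : ℝ) + 1) * α) = ENNReal.ofReal dR := by rw [hdR]
      _ ≤ dimH G := hdim
      _ ≤ dimH (Ψ '' G) := hanti.le_dimH_image G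
      _ ≤ dimH (VSChain k (fun j : Fin k => t j) E) := dimH_mono himg
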